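/- Let 1 < p < ∞ and N > 8 an integer. Then ∫_0^{π/4} (∑_{s=2}^{N+1} 2^{-s(1-1/p)} min{2^s, |sin(2x)|^{-1}})^p dx ≤ C_p N for a constant C_p independent of N. -/

import Mathlib

open MeasureTheory

open Real Finset Set in
private lemma exists_pow_bounds {T : ℝ} (hT : 1 ≤ T) :
    ∃ k : ℕ, (2:ℝ) ^ k ≤ T ∧ T ≤ (2:ℝ) ^ (k + 1) := by
  have hfl : 1 ≤ ⌊T⌋₊ := Nat.le_floor (by exact_mod_cast hT)
  refine ⟨Nat.log 2 ⌊T⌋₊, ?_, ?_⟩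
  · have h1 : (2:ℕ) ^ Nat.log 2 ⌊T⌋₊ ≤ ⌊T⌋₊ := Nat.pow_log_le_self 2 (by omega)
    have h2 : (⌊T⌋₊ : ℝ) ≤ T := Nat.floor_le (by linarith)
    calc (2:ℝ) ^ Nat.log 2 ⌊T⌋₊ = ((2 ^ Nat.log 2 ⌊T⌋₊ : ℕ) : ℝ) := by push_cast; ring
    _ ≤ (⌊T⌋₊ : ℝ) := by exact_mod_cast h1
    _ ≤ T := h2
  · have h1 : ⌊T⌋₊ < 2 ^ (Nat.log 2 ⌊T⌋₊ + 1) := Nat.lt_pow_succ_log_self (by norm_num) _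
    have h2 : T < (⌊T⌋₊ : ℝ) + 1 := Nat.lt_floor_add_one T
    have h3 : ((⌊T⌋₊ : ℝ) + 1) ≤ ((2 ^ (Nat.log 2 ⌊T⌋₊ + 1) : ℕ) : ℝ) := by
      exact_mod_cast Nat.succ_le_of_lt h1
    calc T ≤ (⌊T⌋₊ : ℝ) + 1 := h2.le
    _ ≤ ((2 ^ (Nat.log 2 ⌊T⌋₊ + 1) : ℕ) : ℝ) := h3
    _ = (2:ℝ) ^ (Nat.log 2 ⌊T⌋₊ + 1) := by push_cast; ring

open Real Finset Set in
lemma key_sum (p : ℝ) (hp : 1 < p) (N : ℕ) (T : ℝ) (hT : 1 ≤ T) :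
    ∑ s ∈ Finset.Icc 2 (N + 1),
        (2 : ℝ) ^ (-(s : ℝ) * (1 - 1/p)) * min ((2 : ℝ) ^ (s : ℝ)) T ≤
      ((2:ℝ) ^ (1/p) / ((2:ℝ) ^ (1/p) - 1) + 1 / (1 - (2:ℝ) ^ (-(1 - 1/p))))
        * (min ((2:ℝ) ^ ((N:ℝ) + 1)) T) ^ (1/p) := by
  have hp0 : 0 < p := by linarith
  have hpne : p ≠ 0 := hp0.ne'
  have hp1 : 0 < 1/p := by positivity
  have hp1' : 1/p < 1 := by rw [div_lt_one hp0]; linarith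
  set r : ℝ := (2:ℝ) ^ (1/p) with hr_def
  set q : ℝ := (2:ℝ) ^ (-(1 - 1/p)) with hq_def
  have hr : 1 < r := by
    rw [hr_def]
    exact Real.one_lt_rpow_iff_of_pos (by norm_num) |>.mpr (Or.inl ⟨by norm_num, hp1⟩)
  have hq0 : 0 < q := Real.rpow_pos_of_pos (by norm_num) _
  have hq1 : q < 1 := by
    rw [hq_def]
    exact Real.rpow_lt_one_of_one_lt_of_neg (by norm_num) (by linarith)
  have hT0 : 0 < T := by linarith
  -- rewrite each term as min (r^s) (q^s * T)
  have h_q : ∀ s : ℕ, (2:ℝ) ^ (-(s:ℝ) * (1 - 1/p)) = q ^ s := by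
    intro s
    rw [hq_def, ← Real.rpow_natCast ((2:ℝ) ^ (-(1 - 1/p))) s,
      ← Real.rpow_mul (by norm_num)]
    congr 1; ring
  have h_r : ∀ s : ℕ, (2:ℝ) ^ (-(s:ℝ) * (1 - 1/p)) * (2:ℝ) ^ (s:ℝ) = r ^ s := by
    intro s
    rw [hr_def, ← Real.rpow_natCast ((2:ℝ) ^ (1/p)) s, ← Real.rpow_mul (by norm_num),
      ← Real.rpow_add (by norm_num : (0:ℝ) < 2)]
    congr 1; field_simp; ring
  have hterm : ∀ s : ℕ, (2:ℝ) ^ (-(s:ℝ) * (1 - 1/p)) * min ((2:ℝ) ^ (s:ℝ)) T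
      = min (r ^ s) (q ^ s * T) := by
    intro s
    rw [mul_min_of_nonneg _ _ (le_of_lt (Real.rpow_pos_of_pos (by norm_num) _)),
      h_r s, h_q s]
  rw [Finset.sum_congr rfl fun s _ => hterm s]
  -- two identities relating powers of r, q to rpow of powers of 2
  have hrpow : ∀ k : ℕ, ((2:ℝ) ^ k) ^ (1/p) = r ^ k := by
    intro k
    rw [hr_def, ← Real.rpow_natCast (2:ℝ) k, ← Real.rpow_natCast ((2:ℝ) ^ (1/p)) k,
      ← Real.rpow_mul (by norm_num), ← Real.rpow_mul (by norm_num)]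
    congr 1; ring
  have hqpow : ∀ k : ℕ, ((2:ℝ) ^ k) ^ (-(1 - 1/p)) = q ^ k := by
    intro k
    rw [hq_def, ← Real.rpow_natCast (2:ℝ) k, ← Real.rpow_natCast ((2:ℝ) ^ (-(1-1/p))) k,
      ← Real.rpow_mul (by norm_num), ← Real.rpow_mul (by norm_num)]
    congr 1; ring
  have hrA : ((2:ℝ) ^ ((N:ℝ) + 1)) ^ (1/p) = r ^ (N + 1) := by
    rw [show ((N:ℝ) + 1) = ((N + 1 : ℕ) : ℝ) by push_cast; ring, Real.rpow_natCast (2:ℝ) (N+1)]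
    exact hrpow (N + 1)
  have hr1 : (0:ℝ) < r - 1 := by linarith
  have hq1' : (0:ℝ) < 1 - q := by linarith
  have hrdiv : (0:ℝ) ≤ r / (r - 1) := div_nonneg (by linarith) hr1.le
  have hqdiv : (0:ℝ) ≤ 1 / (1 - q) := div_nonneg zero_le_one hq1'.le
  have hCp0 : 0 ≤ r / (r - 1) + 1 / (1 - q) := add_nonneg hrdiv hqdiv
  -- Bound 1 : sum ≤ (r/(r-1)) * A^(1/p)
  have bound1 : ∑ s ∈ Finset.Icc 2 (N + 1), min (r ^ s) (q ^ s * T)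
      ≤ (r / (r - 1)) * ((2:ℝ) ^ ((N:ℝ) + 1)) ^ (1/p) := by
    rw [hrA]
    calc ∑ s ∈ Finset.Icc 2 (N + 1), min (r ^ s) (q ^ s * T)
        ≤ ∑ s ∈ Finset.Icc 2 (N + 1), r ^ s :=
          Finset.sum_le_sum fun s _ => min_le_left _ _
      _ ≤ ∑ s ∈ Finset.range (N + 2), r ^ s := by
          apply Finset.sum_le_sum_of_subset_of_nonneg
          · intro s hs
            simp only [Finset.mem_Icc] at hs
            simp only [Finset.mem_range]; omega
          · intro s _ _; positivity
      _ = (r ^ (N + 2) - 1) / (r - 1) := geom_sum_eq hr.ne' _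
      _ ≤ r ^ (N + 2) / (r - 1) := by
          gcongr
          exact sub_le_self _ zero_le_one
      _ = (r / (r - 1)) * r ^ (N + 1) := by ring
  -- Bound 2 : sum ≤ Cp * T^(1/p)
  have bound2 : ∑ s ∈ Finset.Icc 2 (N + 1), min (r ^ s) (q ^ s * T)
      ≤ (r / (r - 1) + 1 / (1 - q)) * T ^ (1/p) := by
    obtain ⟨k, hk1, hk2⟩ := exists_pow_bounds hT
    have hrk : r ^ k ≤ T ^ (1/p) := by
      rw [← hrpow k]
      exact Real.rpow_le_rpow (by positivity) hk1 hp1.le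
    have hqk : q ^ (k+1) * T ≤ T ^ (1/p) := by
      have h1 : q ^ (k+1) ≤ T ^ (-(1 - 1/p)) := by
        rw [← hqpow (k+1)]
        exact Real.rpow_le_rpow_of_nonpos hT0 hk2 (by linarith)
      have h2 : T ^ (-(1 - 1/p)) * T = T ^ (1/p) := by
        nth_rewrite 2 [← Real.rpow_one T]
        rw [← Real.rpow_add hT0]
        congr 1; ring
      calc q ^ (k+1) * T ≤ T ^ (-(1 - 1/p)) * T :=
            mul_le_mul_of_nonneg_right h1 hT0.le
        _ = T ^ (1/p) := h2
    have hsplit := Finset.sum_filter_add_sum_filter_not (Finset.Icc 2 (N + 1))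
      (fun s => s ≤ k) (fun s => min (r ^ s) (q ^ s * T))
    rw [← hsplit]
    have hA : ∑ s ∈ (Finset.Icc 2 (N+1)).filter (fun s => s ≤ k), min (r ^ s) (q ^ s * T)
        ≤ (r / (r - 1)) * T ^ (1/p) := by
      calc ∑ s ∈ (Finset.Icc 2 (N+1)).filter (fun s => s ≤ k), min (r ^ s) (q ^ s * T)
          ≤ ∑ s ∈ (Finset.Icc 2 (N+1)).filter (fun s => s ≤ k), r ^ s :=
            Finset.sum_le_sum fun s _ => min_le_left _ _
        _ ≤ ∑ s ∈ Finset.range (k + 1), r ^ s := by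
            apply Finset.sum_le_sum_of_subset_of_nonneg
            · intro s hs
              simp only [Finset.mem_filter, Finset.mem_Icc] at hs
              simp only [Finset.mem_range]; omega
            · intro s _ _; positivity
        _ = (r ^ (k + 1) - 1) / (r - 1) := geom_sum_eq hr.ne' _
        _ ≤ r ^ (k + 1) / (r - 1) := by
            gcongr
            exact sub_le_self _ zero_le_one
        _ = (r / (r - 1)) * r ^ k := by ring
        _ ≤ (r / (r - 1)) * T ^ (1/p) := by
            exact mul_le_mul_of_nonneg_left hrk hrdiv
    have hB : ∑ s ∈ (Finset.Icc 2 (N+1)).filter (fun s => ¬ s ≤ k), min (r ^ s) (q ^ s * T)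
        ≤ (1 / (1 - q)) * T ^ (1/p) := by
      calc ∑ s ∈ (Finset.Icc 2 (N+1)).filter (fun s => ¬ s ≤ k), min (r ^ s) (q ^ s * T)
          ≤ ∑ s ∈ (Finset.Icc 2 (N+1)).filter (fun s => ¬ s ≤ k), q ^ s * T :=
            Finset.sum_le_sum fun s _ => min_le_right _ _
        _ = (∑ s ∈ (Finset.Icc 2 (N+1)).filter (fun s => ¬ s ≤ k), q ^ s) * T := by
            rw [Finset.sum_mul]
        _ ≤ (∑ s ∈ Finset.Ico (k+1) (N+2), q ^ s) * T := by
            apply mul_le_mul_of_nonneg_right ?_ hT0.le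
            apply Finset.sum_le_sum_of_subset_of_nonneg
            · intro s hs
              simp only [Finset.mem_filter, Finset.mem_Icc] at hs
              simp only [Finset.mem_Ico]; omega
            · intro s _ _; positivity
        _ ≤ (q ^ (k+1) / (1 - q)) * T := by
            apply mul_le_mul_of_nonneg_right (geom_sum_Ico_le_of_lt_one hq0.le hq1) hT0.le
        _ = (1 / (1 - q)) * (q ^ (k+1) * T) := by ring
        _ ≤ (1 / (1 - q)) * T ^ (1/p) := by
            exact mul_le_mul_of_nonneg_left hqk hqdiv
    calc _ ≤ (r / (r-1)) * T ^ (1/p) + (1 / (1-q)) * T ^ (1/p) := add_le_add hA hB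
      _ = (r / (r - 1) + 1 / (1 - q)) * T ^ (1/p) := by ring
  -- combine
  rcases le_total ((2:ℝ) ^ ((N:ℝ) + 1)) T with h | h
  · rw [min_eq_left h]
    refine bound1.trans ?_
    have : 0 ≤ ((2:ℝ) ^ ((N:ℝ) + 1)) ^ (1/p) := by positivity
    nlinarith [mul_nonneg hqdiv this]
  · rw [min_eq_right h]
    exact bound2

/-- **The key integral estimate for the `L^p` counterexample.** For `1 < p < ∞` there is a
constant `C_p` such that for all integers `N > 8`,
`∫_0^{π/4} (∑_{s=2}^{N+1} 2^{-s(1-1/p)} min{2^s, |sin(2x)|⁻¹})^p dx ≤ C_p N`. -/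
theorem dyadic_integral_estimate (p : ℝ) (hp : 1 < p) :
    ∃ C : ℝ, ∀ N : ℕ, 8 < N →
      (∫ x in Set.Ioc (0 : ℝ) (Real.pi / 4),
          (∑ s ∈ Finset.Icc 2 (N + 1),
              (2 : ℝ) ^ (-(s : ℝ) * (1 - 1/p)) *
                min ((2 : ℝ) ^ (s : ℝ)) |Real.sin (2 * x)|⁻¹) ^ p) ≤ C * N := by
  have hp0 : 0 < p := by linarith
  have hpne : p ≠ 0 := hp0.ne'
  have hp1 : 0 < 1/p := by positivity
  set Cp : ℝ := (2:ℝ) ^ (1/p) / ((2:ℝ) ^ (1/p) - 1) + 1 / (1 - (2:ℝ) ^ (-(1 - 1/p)))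
    with hCp_def
  have hr : 1 < (2:ℝ) ^ (1/p) :=
    Real.one_lt_rpow_iff_of_pos (by norm_num) |>.mpr (Or.inl ⟨by norm_num, hp1⟩)
  have hq0 : 0 < (2:ℝ) ^ (-(1 - 1/p)) := Real.rpow_pos_of_pos (by norm_num) _
  have hq1 : (2:ℝ) ^ (-(1 - 1/p)) < 1 := by
    apply Real.rpow_lt_one_of_one_lt_of_neg (by norm_num)
    have : 1/p < 1 := by rw [div_lt_one hp0]; linarith
    linarith
  have hCp : 0 < Cp := by
    rw [hCp_def]
    have h1 : 0 < (2:ℝ) ^ (1/p) / ((2:ℝ) ^ (1/p) - 1) :=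
      div_pos (by linarith) (by linarith)
    have h2 : 0 < 1 / (1 - (2:ℝ) ^ (-(1 - 1/p))) := div_pos one_pos (by linarith)
    linarith
  set K : ℝ := Cp ^ p with hK_def
  have hK0 : 0 ≤ K := Real.rpow_nonneg hCp.le _
  refine ⟨K * (1 + 2 * Real.log 2), fun N hN => ?_⟩
  have hNR : (9:ℝ) ≤ (N:ℝ) := by exact_mod_cast hN
  set b : ℝ := Real.pi / 4 with hb_def
  have hb0 : 0 < b := by positivity
  have hb1 : b < 1 := by
    rw [hb_def, div_lt_one (by norm_num)]
    linarith [Real.pi_lt_d2]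
  set A : ℝ := (2:ℝ) ^ ((N:ℝ) + 1) with hA_def
  have hA512 : (512:ℝ) ≤ A := by
    have h1 : (2:ℝ) ^ ((9:ℕ):ℝ) ≤ A := by
      rw [hA_def]
      apply Real.rpow_le_rpow_of_exponent_le one_le_two
      push_cast; linarith
    have h2 : (2:ℝ) ^ ((9:ℕ):ℝ) = 512 := by
      rw [Real.rpow_natCast]; norm_num
    linarith [h1, h2 ▸ h1]
  have hA0 : 0 < A := by linarith
  -- the comparison function
  set g : ℝ → ℝ := fun x => K * min A x⁻¹ with hg_def
  -- pointwise bound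
  have hpt : ∀ x ∈ Set.Ioc (0:ℝ) b,
      (∑ s ∈ Finset.Icc 2 (N + 1), (2 : ℝ) ^ (-(s : ℝ) * (1 - 1/p)) *
          min ((2 : ℝ) ^ (s : ℝ)) |Real.sin (2 * x)|⁻¹) ^ p ≤ g x := by
    intro x hx
    obtain ⟨hx0, hxb⟩ := hx
    have h2x : 2 * x ≤ Real.pi / 2 := by rw [hb_def] at hxb; linarith
    have hsin0 : 0 < Real.sin (2 * x) := by
      apply Real.sin_pos_of_pos_of_lt_pi (by linarith)
      linarith [Real.pi_pos]
    have hsin1 : Real.sin (2 * x) ≤ 1 := Real.sin_le_one _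
    have habs : |Real.sin (2 * x)| = Real.sin (2 * x) := abs_of_pos hsin0
    have hxsin : x ≤ Real.sin (2 * x) := by
      have h1 : 2 / Real.pi * (2 * x) ≤ Real.sin (2 * x) :=
        Real.mul_le_sin (by linarith) h2x
      have h2 : x ≤ 2 / Real.pi * (2 * x) := by
        rw [div_mul_eq_mul_div, le_div_iff₀ Real.pi_pos]
        nlinarith [Real.pi_le_four]
      linarith
    set T : ℝ := |Real.sin (2 * x)|⁻¹ with hT_def
    have hT1 : 1 ≤ T := by
      rw [hT_def, habs]
      rw [le_inv_comm₀ one_pos hsin0]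
      simpa using hsin1
    have hTx : T ≤ x⁻¹ := by
      rw [hT_def, habs]
      exact inv_anti₀ hx0 hxsin
    have hsum := key_sum p hp N T hT1
    have hminle : (min A T) ^ (1/p) ≤ (min A x⁻¹) ^ (1/p) := by
      apply Real.rpow_le_rpow (le_min hA0.le (by linarith)) _ hp1.le
      exact min_le_min le_rfl hTx
    have hF : (∑ s ∈ Finset.Icc 2 (N + 1), (2 : ℝ) ^ (-(s : ℝ) * (1 - 1/p)) *
        min ((2 : ℝ) ^ (s : ℝ)) T) ≤ Cp * (min A x⁻¹) ^ (1/p) := by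
      refine hsum.trans ?_
      exact mul_le_mul_of_nonneg_left hminle hCp.le
    have hF0 : 0 ≤ ∑ s ∈ Finset.Icc 2 (N + 1), (2 : ℝ) ^ (-(s : ℝ) * (1 - 1/p)) *
        min ((2 : ℝ) ^ (s : ℝ)) T := by
      apply Finset.sum_nonneg
      intro s _
      apply mul_nonneg (Real.rpow_nonneg (by norm_num) _)
      exact le_min (Real.rpow_nonneg (by norm_num) _) (by rw [hT_def]; positivity)
    have hu0 : 0 ≤ min A x⁻¹ := le_min hA0.le (by positivity)
    calc (∑ s ∈ Finset.Icc 2 (N + 1), (2 : ℝ) ^ (-(s : ℝ) * (1 - 1/p)) *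
          min ((2 : ℝ) ^ (s : ℝ)) T) ^ p
        ≤ (Cp * (min A x⁻¹) ^ (1/p)) ^ p := Real.rpow_le_rpow hF0 hF hp0.le
      _ = Cp ^ p * ((min A x⁻¹) ^ (1/p)) ^ p := Real.mul_rpow hCp.le (Real.rpow_nonneg hu0 _)
      _ = K * min A x⁻¹ := by
          rw [hK_def, ← Real.rpow_mul hu0, one_div, inv_mul_cancel₀ hpne, Real.rpow_one]
      _ = g x := rfl
  -- integrability of the comparison function
  have hmeas : Measurable fun x : ℝ => min A x⁻¹ := measurable_const.min measurable_inv
  have hintAll : IntegrableOn (fun x : ℝ => min A x⁻¹) (Set.Ioc 0 b) := by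
    apply Integrable.mono' (integrableOn_const (C := A) measure_Ioc_lt_top.ne)
      hmeas.aestronglyMeasurable
    filter_upwards [ae_restrict_mem measurableSet_Ioc] with x hx
    rw [Real.norm_eq_abs, abs_of_nonneg (le_min hA0.le (inv_nonneg.mpr hx.1.le))]
    exact min_le_left _ _
  have hgint : Integrable g ((volume : Measure ℝ).restrict (Set.Ioc 0 b)) :=
    hintAll.const_mul K
  -- monotonicity of the integral
  have hmono : (∫ x in Set.Ioc (0 : ℝ) b,
      (∑ s ∈ Finset.Icc 2 (N + 1), (2 : ℝ) ^ (-(s : ℝ) * (1 - 1/p)) *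
          min ((2 : ℝ) ^ (s : ℝ)) |Real.sin (2 * x)|⁻¹) ^ p)
      ≤ ∫ x in Set.Ioc (0 : ℝ) b, g x := by
    apply integral_mono_of_nonneg ?_ hgint
    · filter_upwards [ae_restrict_mem measurableSet_Ioc] with x hx using hpt x hx
    · apply Filter.Eventually.of_forall
      intro x
      apply Real.rpow_nonneg
      apply Finset.sum_nonneg
      intro s _
      apply mul_nonneg (Real.rpow_nonneg (by norm_num) _)
      exact le_min (Real.rpow_nonneg (by norm_num) _) (inv_nonneg.mpr (abs_nonneg _))
  -- compute the integral of the comparison function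
  set c : ℝ := A⁻¹ with hc_def
  have hc0 : 0 < c := inv_pos.mpr hA0
  have hcb : c ≤ b := by
    have h1 : c ≤ (512:ℝ)⁻¹ := by
      rw [hc_def]
      exact inv_anti₀ (by norm_num) hA512
    have h2 : (3:ℝ) < Real.pi := Real.pi_gt_three
    rw [hb_def]
    rw [show ((512:ℝ))⁻¹ = 1/512 by norm_num] at h1
    linarith
  have hunion : Set.Ioc (0:ℝ) b = Set.Ioc 0 c ∪ Set.Ioc c b :=
    (Set.Ioc_union_Ioc_eq_Ioc hc0.le hcb).symm
  have hint1 : IntegrableOn (fun x : ℝ => min A x⁻¹) (Set.Ioc 0 c) :=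
    hintAll.mono_set (Set.Ioc_subset_Ioc_right hcb)
  have hint2 : IntegrableOn (fun x : ℝ => min A x⁻¹) (Set.Ioc c b) :=
    hintAll.mono_set (Set.Ioc_subset_Ioc_left hc0.le)
  have hJ : (∫ x in Set.Ioc (0:ℝ) b, min A x⁻¹) ≤ 1 + ((N:ℝ) + 1) * Real.log 2 := by
    rw [hunion, setIntegral_union (Set.Ioc_disjoint_Ioc_of_le le_rfl) measurableSet_Ioc hint1 hint2]
    have e1 : (∫ x in Set.Ioc (0:ℝ) c, min A x⁻¹) ≤ 1 := by
      have h1 : (∫ x in Set.Ioc (0:ℝ) c, min A x⁻¹) ≤ ∫ _x in Set.Ioc (0:ℝ) c, A :=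
        setIntegral_mono_on hint1 (integrableOn_const measure_Ioc_lt_top.ne)
          measurableSet_Ioc (fun x _ => min_le_left _ _)
      have h2 : (∫ _x in Set.Ioc (0:ℝ) c, A) = c * A := by
        rw [setIntegral_const, Real.volume_real_Ioc, smul_eq_mul,
          max_eq_left (by linarith)]
        ring
      rw [h2, hc_def, inv_mul_cancel₀ hA0.ne'] at h1
      exact h1
    have e2 : (∫ x in Set.Ioc c b, min A x⁻¹) ≤ Real.log b + ((N:ℝ) + 1) * Real.log 2 := by
      have hinv : IntegrableOn (fun x : ℝ => x⁻¹) (Set.Ioc c b) := by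
        apply IntegrableOn.mono_set ?_ Set.Ioc_subset_Icc_self
        apply ContinuousOn.integrableOn_Icc
        exact continuousOn_id.inv₀ fun x hx => ne_of_gt (lt_of_lt_of_le hc0 hx.1)
      have h1 : (∫ x in Set.Ioc c b, min A x⁻¹) ≤ ∫ x in Set.Ioc c b, x⁻¹ :=
        setIntegral_mono_on hint2 hinv measurableSet_Ioc (fun x _ => min_le_right _ _)
      have h2 : (∫ x in Set.Ioc c b, x⁻¹) = Real.log (b / c) := by
        rw [← intervalIntegral.integral_of_le hcb]
        exact integral_inv_of_pos hc0 hb0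
      have h3 : Real.log (b / c) = Real.log b + ((N:ℝ) + 1) * Real.log 2 := by
        rw [hc_def, div_eq_mul_inv, inv_inv, Real.log_mul hb0.ne' hA0.ne', hA_def,
          Real.log_rpow (by norm_num)]
      rw [h2, h3] at h1
      exact h1
    have hlogb : Real.log b ≤ 0 := Real.log_nonpos hb0.le hb1.le
    linarith
  -- put everything together
  have hgval : (∫ x in Set.Ioc (0:ℝ) b, g x) = K * ∫ x in Set.Ioc (0:ℝ) b, min A x⁻¹ := by
    rw [hg_def]
    exact integral_const_mul K _
  have hL : 0 < Real.log 2 := Real.log_pos one_lt_two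
  calc (∫ x in Set.Ioc (0 : ℝ) b,
      (∑ s ∈ Finset.Icc 2 (N + 1), (2 : ℝ) ^ (-(s : ℝ) * (1 - 1/p)) *
          min ((2 : ℝ) ^ (s : ℝ)) |Real.sin (2 * x)|⁻¹) ^ p)
      ≤ ∫ x in Set.Ioc (0:ℝ) b, g x := hmono
    _ = K * ∫ x in Set.Ioc (0:ℝ) b, min A x⁻¹ := hgval
    _ ≤ K * (1 + ((N:ℝ) + 1) * Real.log 2) := mul_le_mul_of_nonneg_left hJ hK0
    _ ≤ K * (1 + 2 * Real.log 2) * (N:ℝ) := by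
        have hnn : 0 ≤ K * (((N:ℝ) - 1) * (1 + Real.log 2)) :=
          mul_nonneg hK0 (mul_nonneg (by linarith) (by linarith))
        nlinarith [hnn]
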